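/- For every even integer L ≥ 2, every β ≥ 0 and every ε with 0 < ε < 1/4, the restricted partition function Z^{ord}(β,ε) = ∫_{\{every bond ε-ordered\}} exp(−β H_ε(φ)) dμ(φ) satisfies Z^{ord}(β,ε) ≤ exp(2βL²)·ε^{L²−1}, and consequently (Z^{ord}(β,ε) / Z_Λ(β,ε))^{1/(2L²)} ≤ exp(β) · ε^{(L²−1)/(2L²)} · (1 − 4ε)^{−1/4}. -/

import Mathlib

open MeasureTheory Real

/-- The site space: the discrete torus of side `L`. -/
abbrev Torus (L : ℕ) := ZMod L × ZMod L

/-- A configuration of the toy model: one circle-valued spin per site. -/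
abbrev Config (L : ℕ) := Torus L → AddCircle (1 : ℝ)

/-- The two unit coordinate vectors `e₁ = (1,0)` and `e₂ = (0,1)`. -/
def coordVec (L : ℕ) : Fin 2 → Torus L
  | 0 => (1, 0)
  | 1 => (0, 1)

/-- The product of normalized Haar measures on the spins. -/
noncomputable def toyMeasure (L : ℕ) [NeZero L] : Measure (Config L) :=
  Measure.pi fun _ => (AddCircle.haarAddCircle : Measure (AddCircle (1 : ℝ)))

/-- A bond `(x, x + eᵢ)` of the configuration `φ` is `ε`-ordered when
`‖φ x - φ (x + eᵢ)‖ ≤ ε/2`, where `‖·‖` is the quotient norm on `ℝ/ℤ`. -/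
def IsOrderedBond (L : ℕ) [NeZero L] (ε : ℝ) (φ : Config L) (x : Torus L) (i : Fin 2) : Prop :=
  ‖φ x - φ (x + coordVec L i)‖ ≤ ε / 2

noncomputable instance (L : ℕ) [NeZero L] (ε : ℝ) (φ : Config L) (x : Torus L) (i : Fin 2) :
    Decidable (IsOrderedBond L ε φ x i) :=
  Real.decidableLE _ _

/-- The toy Hamiltonian: minus the number of `ε`-ordered bonds. -/
noncomputable def toyH (L : ℕ) [NeZero L] (ε : ℝ) (φ : Config L) : ℝ :=
  -(∑ x : Torus L, ∑ i : Fin 2, if IsOrderedBond L ε φ x i then (1 : ℝ) else 0)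

/-- The toy-model partition function. -/
noncomputable def toyZ (L : ℕ) [NeZero L] (β ε : ℝ) : ℝ :=
  ∫ φ, Real.exp (-β * toyH L ε φ) ∂(toyMeasure L)

/-- The ordered-restricted partition function `Z^{ord}`: the integral of the
Boltzmann weight over the configurations all of whose bonds are `ε`-ordered. -/
noncomputable def toyZord (L : ℕ) [NeZero L] (β ε : ℝ) : ℝ :=
  ∫ φ in {φ : Config L | ∀ x : Torus L, ∀ i : Fin 2, IsOrderedBond L ε φ x i},
    Real.exp (-β * toyH L ε φ) ∂(toyMeasure L)

/-! ### Auxiliary material -/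

section Aux

set_option linter.unusedVariables false

lemma aux_circ_ball (c : AddCircle (1:ℝ)) {ε : ℝ} (h0 : 0 ≤ ε) (h1 : ε ≤ 1) :
    (AddCircle.haarAddCircle : Measure (AddCircle (1:ℝ))) {a | ‖a - c‖ ≤ ε/2}
      = ENNReal.ofReal ε := by
  have hs : {a : AddCircle (1:ℝ) | ‖a - c‖ ≤ ε/2} = Metric.closedBall c (ε/2) := by
    ext a; simp [Metric.mem_closedBall, dist_eq_norm]
  have hvol : (volume : Measure (AddCircle (1:ℝ))) = AddCircle.haarAddCircle := by
    rw [AddCircle.volume_eq_smul_haarAddCircle]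
    simp
  rw [hs, ← hvol, AddCircle.volume_closedBall]
  rw [min_eq_right (by linarith)]
  ring_nf

/-- The event that a chain of consecutive spins are pairwise `ε/2`-close. -/
def auxChainSet (n : ℕ) (ε : ℝ) : Set (Fin n → AddCircle (1:ℝ)) :=
  {f | ∀ i : ℕ, ∀ h : i + 1 < n, ‖f ⟨i, by omega⟩ - f ⟨i+1, h⟩‖ ≤ ε/2}

lemma auxChainSet_measurable (n : ℕ) (ε : ℝ) : MeasurableSet (auxChainSet n ε) := by
  have he : auxChainSet n ε = ⋂ i : ℕ, {f : Fin n → AddCircle (1:ℝ) |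
      ∀ h : i + 1 < n, ‖f ⟨i, by omega⟩ - f ⟨i+1, h⟩‖ ≤ ε/2} := by
    ext f; simp only [auxChainSet, Set.mem_iInter, Set.mem_setOf_eq]
  rw [he]
  refine MeasurableSet.iInter fun i => ?_
  by_cases h : i + 1 < n
  · have he2 : {f : Fin n → AddCircle (1:ℝ) |
        ∀ h : i + 1 < n, ‖f ⟨i, by omega⟩ - f ⟨i+1, h⟩‖ ≤ ε/2}
        = {f | ‖f ⟨i, by omega⟩ - f ⟨i+1, h⟩‖ ≤ ε/2} := by
      ext f; simp only [Set.mem_setOf_eq]; exact ⟨fun H => H h, fun H _ => H⟩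
    rw [he2]
    have h1 : Measurable fun f : Fin n → AddCircle (1:ℝ) =>
        f ⟨i, by omega⟩ - f ⟨i+1, h⟩ :=
      (measurable_pi_apply _).sub (measurable_pi_apply _)
    exact measurableSet_le h1.norm measurable_const
  · have he2 : {f : Fin n → AddCircle (1:ℝ) |
        ∀ h : i + 1 < n, ‖f ⟨i, by omega⟩ - f ⟨i+1, h⟩‖ ≤ ε/2} = Set.univ := by
      ext f; simp only [Set.mem_setOf_eq, Set.mem_univ, iff_true]
      intro h'; exact absurd h' h
    rw [he2]; exact MeasurableSet.univ

lemma aux_chain_bound_succ (ε : ℝ) (hε0 : 0 ≤ ε) (hε1 : ε ≤ 1) : ∀ m : ℕ,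
    (Measure.pi fun _ : Fin (m+1) => (AddCircle.haarAddCircle : Measure (AddCircle (1:ℝ))))
      (auxChainSet (m+1) ε) ≤ ENNReal.ofReal ε ^ m := by
  intro m
  induction m with
  | zero =>
    simp only [pow_zero]
    exact prob_le_one
  | succ m ih =>
    set μ0 : Measure (AddCircle (1:ℝ)) := AddCircle.haarAddCircle with hμ0
    set ν : Measure (Fin (m+1) → AddCircle (1:ℝ)) := Measure.pi fun _ => μ0 with hν
    set e := MeasurableEquiv.piFinSuccAbove (fun _ : Fin (m+2) => AddCircle (1:ℝ))
      (Fin.last (m+1)) with he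
    have hmp : MeasurePreserving e (Measure.pi fun _ : Fin (m+2) => μ0) (μ0.prod ν) :=
      MeasureTheory.measurePreserving_piFinSuccAbove (fun _ : Fin (m+2) => μ0) (Fin.last (m+1))
    set T : Set (AddCircle (1:ℝ) × (Fin (m+1) → AddCircle (1:ℝ))) :=
      {p | p.2 ∈ auxChainSet (m+1) ε ∧ ‖p.2 (Fin.last m) - p.1‖ ≤ ε/2} with hT
    have hTm : MeasurableSet T := by
      have h1 : Measurable fun p : AddCircle (1:ℝ) × (Fin (m+1) → AddCircle (1:ℝ)) =>
          p.2 (Fin.last m) - p.1 :=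
        ((measurable_pi_apply _).comp measurable_snd).sub measurable_fst
      exact (((auxChainSet_measurable (m+1) ε).preimage measurable_snd)).inter
        (measurableSet_le h1.norm measurable_const)
    have hsub : auxChainSet (m+2) ε ⊆ e ⁻¹' T := by
      intro f hf
      have hefst : (e f).1 = f (Fin.last (m+1)) := rfl
      have hesnd : ∀ j : Fin (m+1), (e f).2 j = f j.castSucc := by
        intro j
        show f ((Fin.last (m+1)).succAbove j) = f j.castSucc
        rw [Fin.succAbove_last]
      constructor
      · intro i h
        have h2 : i + 1 < m + 2 := by omega
        have := hf i h2
        have e1 : (⟨i, by omega⟩ : Fin (m+1)).castSucc = (⟨i, by omega⟩ : Fin (m+2)) := rfl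
        have e2 : (⟨i+1, h⟩ : Fin (m+1)).castSucc = (⟨i+1, h2⟩ : Fin (m+2)) := rfl
        rw [hesnd, hesnd, e1, e2]
        exact this
      · have h2 : m + 1 < m + 2 := by omega
        have := hf m h2
        have e1 : (Fin.last m).castSucc = (⟨m, by omega⟩ : Fin (m+2)) := rfl
        have e2 : Fin.last (m+1) = (⟨m+1, h2⟩ : Fin (m+2)) := rfl
        rw [hesnd, hefst, e1, e2]
        exact this
    calc (Measure.pi fun _ : Fin (m+2) => μ0) (auxChainSet (m+2) ε)
        ≤ (Measure.pi fun _ : Fin (m+2) => μ0) (e ⁻¹' T) := measure_mono hsub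
      _ = (μ0.prod ν) T := hmp.measure_preimage hTm.nullMeasurableSet
      _ = ∫⁻ g, μ0 ((fun a => (a, g)) ⁻¹' T) ∂ν := Measure.prod_apply_symm hTm
      _ = ∫⁻ g, Set.indicator (auxChainSet (m+1) ε) (fun _ => ENNReal.ofReal ε) g ∂ν := by
          refine lintegral_congr fun g => ?_
          by_cases hg : g ∈ auxChainSet (m+1) ε
          · rw [Set.indicator_of_mem hg]
            have : (fun a => (a, g)) ⁻¹' T = {a | ‖a - g (Fin.last m)‖ ≤ ε/2} := by
              ext a
              simp only [hT, Set.mem_preimage, Set.mem_setOf_eq, hg, true_and]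
              rw [norm_sub_rev]
            rw [this]
            exact aux_circ_ball _ hε0 hε1
          · rw [Set.indicator_of_notMem hg]
            have : (fun a => (a, g)) ⁻¹' T = ∅ := by
              ext a
              simp only [hT, Set.mem_preimage, Set.mem_setOf_eq, hg, false_and,
                Set.mem_empty_iff_false]
            rw [this, measure_empty]
      _ = ENNReal.ofReal ε * ν (auxChainSet (m+1) ε) := by
          rw [lintegral_indicator_const (auxChainSet_measurable (m+1) ε)]
      _ ≤ ENNReal.ofReal ε * ENNReal.ofReal ε ^ m := mul_le_mul_right ih _
      _ = ENNReal.ofReal ε ^ (m+1) := by ring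

lemma aux_chain_bound (ε : ℝ) (hε0 : 0 ≤ ε) (hε1 : ε ≤ 1) (n : ℕ) :
    (Measure.pi fun _ : Fin n => (AddCircle.haarAddCircle : Measure (AddCircle (1:ℝ))))
      (auxChainSet n ε) ≤ ENNReal.ofReal ε ^ (n - 1) := by
  cases n with
  | zero => simpa using prob_le_one
  | succ m => simpa using aux_chain_bound_succ ε hε0 hε1 m

/-- The boustrophedon enumeration of the torus. -/
def auxSnake (L : ℕ) (k : ℕ) : Torus L :=
  (if (k / L) % 2 = 0 then ((k % L : ℕ) : ZMod L) else ((L - 1 - k % L : ℕ) : ZMod L),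
   ((k / L : ℕ) : ZMod L))

lemma auxSnake_inj (L : ℕ) [NeZero L] {k k' : ℕ} (hk : k < L^2) (hk' : k' < L^2)
    (h : auxSnake L k = auxSnake L k') : k = k' := by
  have hL : 0 < L := Nat.pos_of_ne_zero (NeZero.ne L)
  have hdiv : k / L < L := Nat.div_lt_of_lt_mul (by rw [← pow_two]; exact hk)
  have hdiv' : k' / L < L := Nat.div_lt_of_lt_mul (by rw [← pow_two]; exact hk')
  have hmod : k % L < L := Nat.mod_lt _ hL
  have hmod' : k' % L < L := Nat.mod_lt _ hL
  obtain ⟨h1, h2⟩ := Prod.mk.injEq .. ▸ h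
  have hdm1 := Nat.div_add_mod k L
  have hdm2 := Nat.div_add_mod k' L
  have hrow : k / L = k' / L := by
    have := congrArg ZMod.val h2
    rwa [ZMod.val_cast_of_lt hdiv, ZMod.val_cast_of_lt hdiv'] at this
  have hcol : k % L = k' % L := by
    rw [hrow] at h1
    by_cases hp : (k' / L) % 2 = 0
    · rw [if_pos hp, if_pos hp] at h1
      have := congrArg ZMod.val h1
      rwa [ZMod.val_cast_of_lt hmod, ZMod.val_cast_of_lt hmod'] at this
    · rw [if_neg hp, if_neg hp] at h1
      have := congrArg ZMod.val h1
      rw [ZMod.val_cast_of_lt (by omega), ZMod.val_cast_of_lt (by omega)] at this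
      omega
  have hmul : L * (k / L) = L * (k' / L) := by rw [hrow]
  omega

lemma auxSnake_adj (L : ℕ) [NeZero L] (hL : 2 ≤ L) (i : ℕ) (h : i + 1 < L^2) :
    ∃ j : Fin 2, auxSnake L (i+1) = auxSnake L i + coordVec L j ∨
      auxSnake L i = auxSnake L (i+1) + coordVec L j := by
  have hL0 : 0 < L := by omega
  set r := i / L with hr
  set c := i % L with hc
  have hcL : c < L := Nat.mod_lt _ hL0
  have hdm := Nat.div_add_mod i L
  have hi : i + 1 = L * r + (c + 1) := by rw [hr, hc]; omega
  by_cases hcase : c + 1 < L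
  · have hd : (i+1) / L = r := by
      rw [hi, Nat.mul_add_div hL0, Nat.div_eq_of_lt hcase, add_zero]
    have hm : (i+1) % L = c + 1 := by
      rw [hi, Nat.mul_add_mod, Nat.mod_eq_of_lt hcase]
    by_cases hp : r % 2 = 0
    · refine ⟨0, Or.inl ?_⟩
      show auxSnake L (i+1) = auxSnake L i + (1, 0)
      rw [auxSnake, auxSnake, hd, hm, ← hr, ← hc, if_pos hp, if_pos hp, Prod.mk_add_mk,
        add_zero]
      push_cast
      rfl
    · refine ⟨0, Or.inr ?_⟩
      show auxSnake L i = auxSnake L (i+1) + (1, 0)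
      rw [auxSnake, auxSnake, hd, hm, ← hr, ← hc, if_neg hp, if_neg hp, Prod.mk_add_mk,
        add_zero]
      have : L - 1 - c = (L - 1 - (c+1)) + 1 := by omega
      rw [this]
      push_cast
      rfl
  · have hcL1 : c = L - 1 := by omega
    have hi1 : i + 1 = L * (r + 1) := by
      have e : L * (r + 1) = L * r + L := by ring
      rw [hr, hc] at *
      omega
    have hd : (i+1) / L = r + 1 := by rw [hi1, Nat.mul_div_cancel_left _ hL0]
    have hm : (i+1) % L = 0 := by rw [hi1, Nat.mul_mod_right]
    by_cases hp : r % 2 = 0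
    · refine ⟨1, Or.inl ?_⟩
      show auxSnake L (i+1) = auxSnake L i + (0, 1)
      have hp' : (r + 1) % 2 ≠ 0 := by omega
      rw [auxSnake, auxSnake, hd, hm, ← hr, ← hc, if_neg hp', if_pos hp, Prod.mk_add_mk,
        add_zero, hcL1]
      have : L - 1 - 0 = L - 1 := by omega
      rw [this]
      push_cast
      rfl
    · refine ⟨1, Or.inl ?_⟩
      show auxSnake L (i+1) = auxSnake L i + (0, 1)
      have hp' : (r + 1) % 2 = 0 := by omega
      rw [auxSnake, auxSnake, hd, hm, ← hr, ← hc, if_pos hp', if_neg hp, Prod.mk_add_mk,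
        add_zero, hcL1]
      have : L - 1 - (L - 1) = 0 := by omega
      rw [this]
      push_cast
      rfl

noncomputable def auxSnakeEquiv (L : ℕ) [NeZero L] : Fin (L^2) ≃ Torus L :=
  Equiv.ofBijective (fun k => auxSnake L k.val)
    ((Fintype.bijective_iff_injective_and_card _).mpr
      ⟨fun k k' h => Fin.ext (auxSnake_inj L k.isLt k'.isLt h),
       by simp [ZMod.card, pow_two]⟩)

/-- The all-bonds-ordered event. -/
def auxOrdSet (L : ℕ) [NeZero L] (ε : ℝ) : Set (Config L) :=
  {φ : Config L | ∀ x : Torus L, ∀ i : Fin 2, IsOrderedBond L ε φ x i}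

lemma auxOrdSet_measurable (L : ℕ) [NeZero L] (ε : ℝ) : MeasurableSet (auxOrdSet L ε) := by
  have he : auxOrdSet L ε = ⋂ x : Torus L, ⋂ i : Fin 2,
      {φ : Config L | ‖φ x - φ (x + coordVec L i)‖ ≤ ε/2} := by
    ext φ; simp only [auxOrdSet, Set.mem_iInter, Set.mem_setOf_eq, IsOrderedBond]
  rw [he]
  refine MeasurableSet.iInter fun x => MeasurableSet.iInter fun i => ?_
  have h1 : Measurable fun φ : Config L => φ x - φ (x + coordVec L i) :=
    (measurable_pi_apply _).sub (measurable_pi_apply _)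
  exact measurableSet_le h1.norm measurable_const

lemma auxOrdSet_measure_le (L : ℕ) [NeZero L] (hL : 2 ≤ L) {ε : ℝ}
    (hε0 : 0 ≤ ε) (hε1 : ε ≤ 1) :
    toyMeasure L (auxOrdSet L ε) ≤ ENNReal.ofReal ε ^ (L^2 - 1) := by
  set b := auxSnakeEquiv L with hb
  set e := MeasurableEquiv.piCongrLeft (fun _ : Torus L => AddCircle (1:ℝ)) b with he
  have hmp : MeasurePreserving e
      (Measure.pi fun _ : Fin (L^2) => (AddCircle.haarAddCircle : Measure (AddCircle (1:ℝ))))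
      (toyMeasure L) :=
    MeasureTheory.measurePreserving_piCongrLeft (fun _ => AddCircle.haarAddCircle) b
  have hsub : e ⁻¹' auxOrdSet L ε ⊆ auxChainSet (L^2) ε := by
    intro f hf i h
    have key : ∀ k : Fin (L^2), e f (b k) = f k := fun k =>
      MeasurableEquiv.piCongrLeft_apply_apply (β := fun _ : Torus L => AddCircle (1:ℝ)) b f k
    have hb1 : b ⟨i, by omega⟩ = auxSnake L i := rfl
    have hb2 : b ⟨i+1, h⟩ = auxSnake L (i+1) := rfl
    have k1 := key ⟨i, by omega⟩
    have k2 := key ⟨i+1, h⟩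
    rw [hb1] at k1
    rw [hb2] at k2
    obtain ⟨j, hj | hj⟩ := auxSnake_adj L hL i h
    · have hbond := hf (auxSnake L i) j
      rw [IsOrderedBond, ← hj, k1, k2] at hbond
      exact hbond
    · have hbond := hf (auxSnake L (i+1)) j
      rw [IsOrderedBond, ← hj, k1, k2] at hbond
      rw [norm_sub_rev]
      exact hbond
  calc toyMeasure L (auxOrdSet L ε)
      = (Measure.pi fun _ : Fin (L^2) =>
          (AddCircle.haarAddCircle : Measure (AddCircle (1:ℝ)))) (e ⁻¹' auxOrdSet L ε) :=
        (hmp.measure_preimage (auxOrdSet_measurable L ε).nullMeasurableSet).symm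
    _ ≤ (Measure.pi fun _ : Fin (L^2) =>
          (AddCircle.haarAddCircle : Measure (AddCircle (1:ℝ)))) (auxChainSet (L^2) ε) :=
        measure_mono hsub
    _ ≤ ENNReal.ofReal ε ^ (L^2 - 1) := aux_chain_bound ε hε0 hε1 (L^2)

end Aux

section Main

set_option linter.unusedVariables false

instance aux_prob (L : ℕ) [NeZero L] : IsProbabilityMeasure (toyMeasure L) := by
  unfold toyMeasure; infer_instance

lemma aux_toyH_meas (L : ℕ) [NeZero L] (ε : ℝ) : Measurable (toyH L ε) := by
  refine Measurable.neg ?_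
  refine Finset.measurable_sum _ fun x _ => Finset.measurable_sum _ fun i _ => ?_
  have hset : MeasurableSet {φ : Config L | IsOrderedBond L ε φ x i} := by
    have h1 : Measurable fun φ : Config L => φ x - φ (x + coordVec L i) :=
      (measurable_pi_apply _).sub (measurable_pi_apply _)
    exact measurableSet_le h1.norm measurable_const
  exact Measurable.ite hset measurable_const measurable_const

lemma aux_toyH_bounds (L : ℕ) [NeZero L] (ε : ℝ) (φ : Config L) :
    0 ≤ -toyH L ε φ ∧ -toyH L ε φ ≤ 2 * (L:ℝ)^2 := by
  have hterm : ∀ x : Torus L, ∀ i : Fin 2,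
      (0:ℝ) ≤ (if IsOrderedBond L ε φ x i then (1:ℝ) else 0) ∧
      (if IsOrderedBond L ε φ x i then (1:ℝ) else 0) ≤ 1 := by
    intro x i
    constructor <;> (split <;> norm_num)
  constructor
  · rw [toyH, neg_neg]
    refine Finset.sum_nonneg fun x _ => Finset.sum_nonneg fun i _ => (hterm x i).1
  · rw [toyH, neg_neg]
    calc ∑ x : Torus L, ∑ i : Fin 2, (if IsOrderedBond L ε φ x i then (1:ℝ) else 0)
        ≤ ∑ x : Torus L, (2:ℝ) := by
          refine Finset.sum_le_sum fun x _ => ?_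
          calc ∑ i : Fin 2, (if IsOrderedBond L ε φ x i then (1:ℝ) else 0)
              ≤ ∑ i : Fin 2, (1:ℝ) := Finset.sum_le_sum fun i _ => (hterm x i).2
            _ = 2 := by simp
      _ = (Fintype.card (Torus L) : ℝ) * 2 := by
          rw [Finset.sum_const, Finset.card_univ]; simp [mul_comm]
      _ = 2 * (L:ℝ)^2 := by
          rw [Fintype.card_prod, ZMod.card]
          push_cast
          ring

lemma aux_integrable (L : ℕ) [NeZero L] (β ε : ℝ) (hβ : 0 ≤ β) :
    Integrable (fun φ => Real.exp (-β * toyH L ε φ)) (toyMeasure L) := by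
  have hmeas : Measurable fun φ => Real.exp (-β * toyH L ε φ) :=
    ((aux_toyH_meas L ε).const_mul (-β)).exp
  refine (integrable_const (Real.exp (2 * β * (L:ℝ)^2))).mono'
    hmeas.aestronglyMeasurable (ae_of_all _ fun φ => ?_)
  rw [Real.norm_eq_abs, abs_of_pos (Real.exp_pos _)]
  apply Real.exp_le_exp.mpr
  have hb := aux_toyH_bounds L ε φ
  calc -β * toyH L ε φ = β * (-toyH L ε φ) := by ring
    _ ≤ β * (2 * (L:ℝ)^2) := mul_le_mul_of_nonneg_left hb.2 hβ
    _ = 2 * β * (L:ℝ)^2 := by ring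

lemma aux_toyZ_ge_one (L : ℕ) [NeZero L] (β ε : ℝ) (hβ : 0 ≤ β) : 1 ≤ toyZ L β ε := by
  have h1 : ∫ _φ, (1:ℝ) ∂(toyMeasure L) = 1 := by simp
  rw [toyZ]
  calc (1:ℝ) = ∫ _φ, (1:ℝ) ∂(toyMeasure L) := h1.symm
    _ ≤ ∫ φ, Real.exp (-β * toyH L ε φ) ∂(toyMeasure L) := by
        refine integral_mono (integrable_const 1) (aux_integrable L β ε hβ) fun φ => ?_
        refine Real.one_le_exp ?_
        have hb := aux_toyH_bounds L ε φ
        calc (0:ℝ) ≤ β * (-toyH L ε φ) := mul_nonneg hβ hb.1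
          _ = -β * toyH L ε φ := by ring

lemma aux_part1 (L : ℕ) [NeZero L] (hL : 2 ≤ L) (β ε : ℝ) (hβ : 0 ≤ β)
    (hε : 0 < ε) (hε1 : ε ≤ 1) :
    toyZord L β ε ≤ Real.exp (2 * β * (L:ℝ) ^ 2) * ε ^ (L ^ 2 - 1) := by
  set C := Real.exp (2 * β * (L:ℝ)^2) with hC
  have hSm := auxOrdSet_measurable L ε
  have hbound : ∀ φ : Config L, Real.exp (-β * toyH L ε φ) ≤ C := by
    intro φ
    rw [hC]
    apply Real.exp_le_exp.mpr
    have hb := aux_toyH_bounds L ε φ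
    calc -β * toyH L ε φ = β * (-toyH L ε φ) := by ring
      _ ≤ β * (2 * (L:ℝ)^2) := mul_le_mul_of_nonneg_left hb.2 hβ
      _ = 2 * β * (L:ℝ)^2 := by ring
  have hμ : (toyMeasure L (auxOrdSet L ε)).toReal ≤ ε ^ (L^2 - 1) := by
    refine ENNReal.toReal_le_of_le_ofReal (pow_nonneg hε.le _) ?_
    rw [ENNReal.ofReal_pow hε.le]
    exact auxOrdSet_measure_le L hL hε.le hε1
  calc toyZord L β ε
      ≤ ∫ _φ in auxOrdSet L ε, C ∂(toyMeasure L) := by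
        rw [toyZord]
        refine setIntegral_mono_on ((aux_integrable L β ε hβ).integrableOn)
          (integrableOn_const (measure_lt_top _ _).ne) hSm fun φ _ => hbound φ
    _ = (toyMeasure L (auxOrdSet L ε)).toReal * C := by rw [setIntegral_const]; rfl
    _ ≤ ε ^ (L^2 - 1) * C := mul_le_mul_of_nonneg_right hμ (Real.exp_pos _).le
    _ = C * ε ^ (L^2 - 1) := mul_comm _ _

lemma aux_main (L : ℕ) [NeZero L] (hL : 2 ≤ L) (β ε : ℝ)
    (hβ : 0 ≤ β) (hε : 0 < ε) (hε' : ε < 1 / 4) :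
    toyZord L β ε ≤ Real.exp (2 * β * L ^ 2) * ε ^ (L ^ 2 - 1) ∧
    (toyZord L β ε / toyZ L β ε) ^ ((2 * (L : ℝ) ^ 2)⁻¹) ≤
      Real.exp β * ε ^ (((L : ℝ) ^ 2 - 1) / (2 * (L : ℝ) ^ 2)) *
        (1 - 4 * ε) ^ (-(1 : ℝ) / 4) := by
  have hε1 : ε ≤ 1 := by linarith
  have hLR : (0:ℝ) < (L:ℝ)^2 := by positivity
  have hp1 := aux_part1 L hL β ε hβ hε hε1
  refine ⟨hp1, ?_⟩
  have hA0 : 0 ≤ toyZord L β ε := by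
    rw [toyZord]
    exact setIntegral_nonneg (auxOrdSet_measurable L ε) fun φ _ => (Real.exp_pos _).le
  have hZ1 := aux_toyZ_ge_one L β ε hβ
  have hdiv : toyZord L β ε / toyZ L β ε ≤ toyZord L β ε := div_le_self hA0 hZ1
  have hc0 : (0:ℝ) ≤ (2 * (L:ℝ)^2)⁻¹ := by positivity
  have step2 : (toyZord L β ε / toyZ L β ε) ^ ((2 * (L : ℝ) ^ 2)⁻¹) ≤
      (Real.exp (2 * β * (L:ℝ)^2) * ε ^ (L^2 - 1)) ^ ((2 * (L : ℝ) ^ 2)⁻¹) := by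
    refine Real.rpow_le_rpow (div_nonneg hA0 (by linarith)) (hdiv.trans hp1) hc0
  have hcastL : ((L^2 - 1 : ℕ) : ℝ) = (L:ℝ)^2 - 1 := by
    have h1 : 1 ≤ L^2 := by nlinarith
    push_cast [Nat.cast_sub h1]
    ring
  have step3 : (Real.exp (2 * β * (L:ℝ)^2) * ε ^ (L^2 - 1)) ^ ((2 * (L : ℝ) ^ 2)⁻¹)
      = Real.exp β * ε ^ (((L : ℝ) ^ 2 - 1) / (2 * (L : ℝ) ^ 2)) := by
    rw [Real.mul_rpow (Real.exp_pos _).le (pow_nonneg hε.le _)]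
    congr 1
    · rw [← Real.exp_mul]
      congr 1
      field_simp
    · rw [← Real.rpow_natCast ε (L^2 - 1), ← Real.rpow_mul hε.le]
      congr 1
      rw [hcastL]
      field_simp
  have step4 : (1:ℝ) ≤ (1 - 4 * ε) ^ (-(1 : ℝ) / 4) :=
    Real.one_le_rpow_of_pos_of_le_one_of_nonpos (by linarith) (by linarith) (by norm_num)
  calc (toyZord L β ε / toyZ L β ε) ^ ((2 * (L : ℝ) ^ 2)⁻¹)
      ≤ Real.exp β * ε ^ (((L : ℝ) ^ 2 - 1) / (2 * (L : ℝ) ^ 2)) := by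
        rw [← step3]; exact step2
    _ ≤ Real.exp β * ε ^ (((L : ℝ) ^ 2 - 1) / (2 * (L : ℝ) ^ 2)) *
        (1 - 4 * ε) ^ (-(1 : ℝ) / 4) := by
        refine le_mul_of_one_le_right ?_ step4
        exact mul_nonneg (Real.exp_pos _).le (Real.rpow_nonneg hε.le _)

end Main

/-- `Z^{ord} ≤ exp(2βL²)·ε^{L²−1}` and the per-bond chessboard ratio
bound `(Z^{ord}/Z)^{1/(2L²)} ≤ exp(β)·ε^{(L²−1)/(2L²)}·(1−4ε)^{−1/4}`. -/
theorem toy_Zord_upper_bound (L : ℕ) (hL : 2 ≤ L) (hLeven : Even L) (β ε : ℝ)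
    (hβ : 0 ≤ β) (hε : 0 < ε) (hε' : ε < 1 / 4) :
    haveI : NeZero L := ⟨by omega⟩
    toyZord L β ε ≤ Real.exp (2 * β * L ^ 2) * ε ^ (L ^ 2 - 1) ∧
    (toyZord L β ε / toyZ L β ε) ^ ((2 * (L : ℝ) ^ 2)⁻¹) ≤
      Real.exp β * ε ^ (((L : ℝ) ^ 2 - 1) / (2 * (L : ℝ) ^ 2)) *
        (1 - 4 * ε) ^ (-(1 : ℝ) / 4) := by
  haveI : NeZero L := ⟨by omega⟩
  exact aux_main L hL β ε hβ hε hε'
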